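/- arXiv:1402.5886 — 3 statements merged into one kernel-verified Lean document; each statement's English description precedes it below -/
import Mathlib

section
/- Define k_iff as the maximum size of a collection of regions R' such that for every r ∈ R' there exists a hypothesis h with h ∉ r and h ∈ r' for all r' ∈ R' \ {r}. Define k_as as one plus the maximum size of a collection R'' satisfying additionally that some hypothesis lies in every region of R''. Then k_as ≥ k_iff. -/
/-- `k_iff` is the maximum size of a collection `R'` of regions such that for
every `r ∈ R'` some hypothesis lies outside `r` but inside every other region
of `R'`; `k_as` is one plus the maximum size of such a collection additionally
containing a hypothesis common to all its regions.  Then `k_as ≥ k_iff`. -/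
theorem kas_ge_kiff {α : Type*} [DecidableEq α] (R : Finset (Finset α)) :
    sSup {m : ℕ | ∃ R' : Finset (Finset α), R' ⊆ R ∧ R'.card = m ∧
        ∀ r ∈ R', ∃ h : α, h ∉ r ∧ ∀ r' ∈ R', r' ≠ r → h ∈ r'} ≤
      1 + sSup {m : ℕ | ∃ R' : Finset (Finset α), R' ⊆ R ∧ R'.card = m ∧
        (∃ h : α, ∀ r ∈ R', h ∈ r) ∧
        ∀ r ∈ R', ∃ h : α, h ∉ r ∧ ∀ r' ∈ R', r' ≠ r → h ∈ r'} := by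
  have hbdd : BddAbove {m : ℕ | ∃ R' : Finset (Finset α), R' ⊆ R ∧ R'.card = m ∧
      (∃ h : α, ∀ r ∈ R', h ∈ r) ∧
      ∀ r ∈ R', ∃ h : α, h ∉ r ∧ ∀ r' ∈ R', r' ≠ r → h ∈ r'} := by
    refine ⟨R.card, ?_⟩
    rintro n ⟨R', hs, hc, -⟩
    exact hc ▸ Finset.card_le_card hs
  apply csSup_le
  · exact ⟨0, ∅, by simp⟩
  · rintro m ⟨R', hsub, hcard, hwit⟩
    rcases Finset.eq_empty_or_nonempty R' with rfl | ⟨r, hr⟩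
    · simp at hcard
      omega
    · obtain ⟨h, hhr, hall⟩ := hwit r hr
      have hBmem : (m - 1) ∈ {m : ℕ | ∃ R' : Finset (Finset α), R' ⊆ R ∧ R'.card = m ∧
          (∃ h : α, ∀ r ∈ R', h ∈ r) ∧
          ∀ r ∈ R', ∃ h : α, h ∉ r ∧ ∀ r' ∈ R', r' ≠ r → h ∈ r'} := by
        refine ⟨R'.erase r, (Finset.erase_subset _ _).trans hsub, ?_, ⟨h, ?_⟩, ?_⟩
        · rw [Finset.card_erase_of_mem hr, hcard]
        · intro r' hr'
          exact hall r' (Finset.mem_of_mem_erase hr') (Finset.ne_of_mem_erase hr')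
        · intro r' hr'
          obtain ⟨h', hh', hall'⟩ := hwit r' (Finset.mem_of_mem_erase hr')
          exact ⟨h', hh', fun r'' hr'' hne =>
            hall' r'' (Finset.mem_of_mem_erase hr'') hne⟩
      have := le_csSup hbdd hBmem
      have hm : 1 ≤ m := by
        rw [← hcard]
        exact Finset.card_pos.mpr ⟨r, hr⟩
      omega
end

section
/- Let R be a collection of regions in a finite hypothesis set H, and let k_as be one plus the maximum size of a collection R' of regions satisfying: (1) there exists a hypothesis in every region of R', and (2) for each r ∈ R' there exists h ∉ r with h ∈ r'' for all r'' ∈ R' \ {r}. Then k_as ≤ (max over regions r of the number of distinct subregions contained in r) + 1, where subregions are the equivalence classes of hypotheses under identical region membership. -/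
/-- Two hypotheses lie in the same subregion iff they belong to exactly the
same set of regions; the number of distinct subregions contained in a region
`r` is the number of distinct region-membership patterns among hypotheses of
`r`.  Then `k_as` (one plus the maximum size of a collection `R'` of regions
with a common hypothesis and, for each `r ∈ R'`, a hypothesis outside `r` but
in every other region of `R'`) is at most the maximum over regions `r` of the
number of distinct subregions contained in `r`, plus one. -/
theorem kas_le_max_subregions {α : Type*} [Fintype α] [DecidableEq α]
    (R : Finset (Finset α)) :
    1 + sSup {m : ℕ | ∃ R' : Finset (Finset α), R' ⊆ R ∧ R'.card = m ∧
        (∃ h : α, ∀ r ∈ R', h ∈ r) ∧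
        ∀ r ∈ R', ∃ h : α, h ∉ r ∧ ∀ r' ∈ R', r' ≠ r → h ∈ r'} ≤
      (R.sup fun r => (r.image fun h => R.filter fun s => h ∈ s).card) + 1 := by
  classical
  rw [add_comm]
  refine Nat.add_le_add_right (csSup_le' ?_) 1
  rintro m ⟨R', hsub, rfl, ⟨h₀, hh₀⟩, hw⟩
  rcases R'.eq_empty_or_nonempty with rfl | ⟨r₀, hr₀⟩
  · simp
  set pat : α → Finset (Finset α) := fun h => R.filter fun s => h ∈ s with hpat
  have : Nonempty α := ⟨h₀⟩
  choose! w hw1 hw2 using hw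
  set g : Finset α → α := fun r => if r = r₀ then h₀ else w r with hg
  have hgmem : ∀ r ∈ R', ∀ r' ∈ R', r ≠ r' → g r ∈ r' := by
    intro r hr r' hr' hne
    by_cases h : r = r₀
    · simpa [hg, h] using hh₀ r' hr'
    · simp only [hg, if_neg h]
      exact hw2 r hr r' hr' hne.symm
  have hgnot : ∀ r ∈ R', r ≠ r₀ → g r ∉ r := by
    intro r hr hne
    simp only [hg, if_neg hne]
    exact hw1 r hr
  have main : ∀ a ∈ R', ∀ b ∈ R', a ≠ b → a ≠ r₀ → pat (g a) ≠ pat (g b) := by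
    intro a ha b hb hab ha0 heq
    have h1 : a ∉ pat (g a) := by
      intro hmem
      exact hgnot a ha ha0 (Finset.mem_filter.mp hmem).2
    have h2 : a ∈ pat (g b) :=
      Finset.mem_filter.mpr ⟨hsub ha, hgmem b hb a ha hab.symm⟩
    exact h1 (heq ▸ h2)
  have hinj : Set.InjOn (fun r => pat (g r)) R' := by
    intro a ha b hb heq
    by_contra hne
    by_cases ha0 : a = r₀
    · have hb0 : b ≠ r₀ := fun h => hne (h ▸ ha0)
      exact main b hb a ha (Ne.symm hne) hb0 heq.symm
    · exact main a ha b hb hne ha0 heq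
  have hmaps : ∀ r ∈ R', pat (g r) ∈ r₀.image pat := by
    intro r hr
    apply Finset.mem_image_of_mem
    by_cases h : r = r₀
    · simpa [hg, h] using hh₀ r₀ hr₀
    · exact hgmem r hr r₀ hr₀ h
  calc R'.card ≤ (r₀.image pat).card :=
        Finset.card_le_card_of_injOn (fun r => pat (g r)) hmaps hinj
    _ ≤ _ := Finset.le_sup (f := fun r => (r.image pat).card) (hsub hr₀)
end

section
/- Let E be a finite set of hyperedges with rational nonnegative weights w(e) and define f(S) = w(E) − w(E(S)) for evidence S, where E(S) is the set of hyperedges consistent with S under the construction with cardinality k ≥ k_as. Then for any evidence sets S ⊆ S' and any test t not appearing in S', the expected marginal gain satisfies Δ(t | S) ≥ Δ(t | S'), where Δ(t | S) = Σ_h P(h | S)·(f(S ∪ {(t, h(t))}) − f(S)). -/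
open scoped Classical

noncomputable section HEC

variable {T O : Type*}

/-- A hypothesis `h : T → O` is consistent with evidence `S`. -/
def consistent (S : Set (T × O)) (h : T → O) : Prop := ∀ p ∈ S, h p.1 = p.2

variable [DecidableEq (T → O)]

/-- The region-membership pattern of a hypothesis. -/
def memPattern (R : Finset (Finset (T → O))) (h : T → O) :
    Finset (Finset (T → O)) := R.filter fun r => h ∈ r

/-- Subregions: equivalence classes of hypotheses of `H` under identical
region membership. -/
def subregions (H : Finset (T → O)) (R : Finset (Finset (T → O))) :
    Finset (Finset (T → O)) :=
  H.image fun h => H.filter fun h' => memPattern R h' = memPattern R h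

/-- Hyperedges of cardinality `k`: multisets of `k` subregions not jointly
contained in any single region. -/
def edges (H : Finset (T → O)) (R : Finset (Finset (T → O))) (k : ℕ) :
    Finset (Multiset (Finset (T → O))) :=
  (((subregions H R).sym k).image fun s => (s : Multiset (Finset (T → O)))).filter
    fun e => ¬ ∃ r ∈ R, ∀ g ∈ e, g ⊆ r

/-- Probability mass of a subregion restricted to hypotheses consistent
with `S`. -/
def mass (P : (T → O) → ℚ) (S : Set (T × O)) (g : Finset (T → O)) : ℚ :=
  ∑ h ∈ g.filter fun h => consistent S h, P h

/-- Weight of a hyperedge under evidence `S`: product of the (consistent)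
masses of its subregions, with multiplicities. -/
def edgeWeight (P : (T → O) → ℚ) (S : Set (T × O))
    (e : Multiset (Finset (T → O))) : ℚ := (e.map (mass P S)).prod

/-- The HEC objective `f(S) = w(E) − w(E(S))`. -/
def fHEC (H : Finset (T → O)) (R : Finset (Finset (T → O))) (k : ℕ)
    (P : (T → O) → ℚ) (S : Set (T × O)) : ℚ :=
  (∑ e ∈ edges H R k, edgeWeight P (∅ : Set (T × O)) e) -
    ∑ e ∈ edges H R k, edgeWeight P S e

/-- Posterior `P(h ∣ S)`: prior restricted and renormalized to the hypotheses
consistent with `S`. -/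
def condP (H : Finset (T → O)) (P : (T → O) → ℚ) (S : Set (T × O))
    (h : T → O) : ℚ :=
  P h / ∑ h' ∈ H.filter fun h' => consistent S h', P h'

/-- Expected marginal gain `Δ(t ∣ S)` of test `t` given evidence `S`. -/
def delta (H : Finset (T → O)) (R : Finset (Finset (T → O))) (k : ℕ)
    (P : (T → O) → ℚ) (t : T) (S : Set (T × O)) : ℚ :=
  ∑ h ∈ H.filter fun h => consistent S h,
    condP H P S h * (fHEC H R k P (S ∪ {(t, h t)}) - fHEC H R k P S)

/-- `k_as`: one plus the maximum size of a collection of regions with a common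
hypothesis and, for each of its regions, a hypothesis outside it but in all its
other regions. -/
def kas (H : Finset (T → O)) (R : Finset (Finset (T → O))) : ℕ :=
  1 + sSup {m : ℕ | ∃ R' : Finset (Finset (T → O)), R' ⊆ R ∧ R'.card = m ∧
    (∃ h ∈ H, ∀ r ∈ R', h ∈ r) ∧
    ∀ r ∈ R', ∃ h ∈ H, h ∉ r ∧ ∀ r' ∈ R', r' ≠ r → h ∈ r'}

namespace HECaux

variable {T O : Type*} [DecidableEq (T → O)]

/-! ### Basic lemmas about consistency -/

lemma consistent_mono {S S' : Set (T × O)} (hSS' : S ⊆ S') {h : T → O}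
    (hc : consistent S' h) : consistent S h :=
  fun p hp => hc p (hSS' hp)

lemma consistent_union_singleton {S : Set (T × O)} {t : T} {o : O} {h : T → O} :
    consistent (S ∪ {(t, o)}) h ↔ consistent S h ∧ h t = o := by
  constructor
  · intro hc
    exact ⟨fun p hp => hc p (Or.inl hp), hc (t, o) (Or.inr rfl)⟩
  · rintro ⟨h1, h2⟩ p hp
    rcases hp with hp | hp
    · exact h1 p hp
    · rcases hp with rfl
      exact h2

/-! ### Subregions -/

/-- The subregion of a given hypothesis. -/
def sub (H : Finset (T → O)) (R : Finset (Finset (T → O))) (x : T → O) :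
    Finset (T → O) :=
  H.filter fun h' => memPattern R h' = memPattern R x

variable {H : Finset (T → O)} {R : Finset (Finset (T → O))}

lemma mem_sub_self {x : T → O} (hx : x ∈ H) : x ∈ sub H R x :=
  Finset.mem_filter.2 ⟨hx, rfl⟩

lemma sub_mem_subregions {x : T → O} (hx : x ∈ H) : sub H R x ∈ subregions H R :=
  Finset.mem_image.2 ⟨x, hx, rfl⟩

lemma mem_subregions_iff {g : Finset (T → O)} :
    g ∈ subregions H R ↔ ∃ x ∈ H, g = sub H R x := by
  unfold subregions sub
  simp only [Finset.mem_image]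
  constructor
  · rintro ⟨x, hx, rfl⟩; exact ⟨x, hx, rfl⟩
  · rintro ⟨x, hx, rfl⟩; exact ⟨x, hx, rfl⟩

lemma sub_eq_sub_of_pattern {a b : T → O}
    (hab : memPattern R a = memPattern R b) : sub H R a = sub H R b := by
  unfold sub
  simp only [hab]

lemma pattern_eq_of_mem_sub {a x : T → O} (ha : a ∈ sub H R x) :
    memPattern R a = memPattern R x := (Finset.mem_filter.1 ha).2

lemma sub_eq_of_mem {g : Finset (T → O)} {x : T → O}
    (hg : g ∈ subregions H R) (hx : x ∈ g) : g = sub H R x := by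
  obtain ⟨y, _, rfl⟩ := mem_subregions_iff.1 hg
  exact (sub_eq_sub_of_pattern (pattern_eq_of_mem_sub hx)).symm

lemma subregions_subset_H {g : Finset (T → O)} (hg : g ∈ subregions H R) :
    g ⊆ H := by
  obtain ⟨y, _, rfl⟩ := mem_subregions_iff.1 hg
  exact Finset.filter_subset _ _

lemma subregion_nonempty {g : Finset (T → O)} (hg : g ∈ subregions H R) :
    ∃ a, a ∈ g := by
  obtain ⟨y, hy, rfl⟩ := mem_subregions_iff.1 hg
  exact ⟨y, mem_sub_self hy⟩

lemma subregion_subset_region {g r : Finset (T → O)} {x : T → O}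
    (hg : g ∈ subregions H R) (hxg : x ∈ g) (hr : r ∈ R) (hxr : x ∈ r) :
    g ⊆ r := by
  intro a ha
  have hgx := sub_eq_of_mem hg hxg
  rw [hgx] at ha
  have hpat : memPattern R a = memPattern R x := pattern_eq_of_mem_sub ha
  have hxr' : r ∈ memPattern R x := Finset.mem_filter.2 ⟨hr, hxr⟩
  rw [← hpat] at hxr'
  exact (Finset.mem_filter.1 hxr').2

lemma subregion_eq_of_common {g₁ g₂ : Finset (T → O)} {a : T → O}
    (h1 : g₁ ∈ subregions H R) (h2 : g₂ ∈ subregions H R)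
    (ha1 : a ∈ g₁) (ha2 : a ∈ g₂) : g₁ = g₂ := by
  rw [sub_eq_of_mem h1 ha1, sub_eq_of_mem h2 ha2]

/-! ### Edges -/

lemma symImage_mem {α : Type*} [DecidableEq α] {n : ℕ} {s : Finset (Sym α n)}
    {e : Multiset α} (h : e ∈ s.image fun t => (t : Multiset α)) :
    ∃ t : Sym α n, t ∈ s ∧ (t : Multiset α) = e := by
  simp only [Finset.image_id', Finset.mem_image, id] at h
  simp only [Finset.instMonad, bind, pure] at h
  simp only [Finset.mem_sup, Finset.mem_singleton] at h
  obtain ⟨t, ht, hte⟩ := h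
  exact ⟨t, ht, hte.symm⟩

lemma symImage_mem' {α : Type*} [DecidableEq α] {n : ℕ} {s : Finset (Sym α n)}
    (t : Sym α n) (ht : t ∈ s) :
    (t : Multiset α) ∈ s.image fun u => (u : Multiset α) := by
  simp only [Finset.image_id', Finset.mem_image, id]
  simp only [Finset.instMonad, bind, pure]
  simp only [Finset.mem_sup, Finset.mem_singleton]
  exact ⟨t, ht, rfl⟩

lemma mem_edges_iff {k : ℕ} {e : Multiset (Finset (T → O))} :
    e ∈ edges H R k ↔
      (Multiset.card e = k ∧ ∀ g ∈ e, g ∈ subregions H R) ∧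
        ¬∃ r ∈ R, ∀ g ∈ e, g ⊆ r := by
  unfold edges
  rw [Finset.mem_filter]
  constructor
  · rintro ⟨hmem, hnr⟩
    obtain ⟨s, hs, hse⟩ := symImage_mem hmem
    refine ⟨⟨?_, ?_⟩, hnr⟩
    · rw [← hse]; exact s.prop
    · intro g hg
      rw [← hse] at hg
      exact Finset.mem_sym_iff.1 hs g (Sym.mem_coe.1 hg)
  · rintro ⟨⟨hcard, helem⟩, hnr⟩
    refine ⟨symImage_mem' (⟨e, hcard⟩ : Sym (Finset (T → O)) k)
      (Finset.mem_sym_iff.2 ?_), hnr⟩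
    intro a ha
    exact helem a ((Sym.mem_mk a e hcard).1 ha)

/-! ### The exchange lemma (uses `k ≥ kas`) -/

lemma kas_bddAbove :
    BddAbove {m : ℕ | ∃ R' : Finset (Finset (T → O)), R' ⊆ R ∧ R'.card = m ∧
      (∃ h ∈ H, ∀ r ∈ R', h ∈ r) ∧
      ∀ r ∈ R', ∃ h ∈ H, h ∉ r ∧ ∀ r' ∈ R', r' ≠ r → h ∈ r'} := by
  refine ⟨R.card, ?_⟩
  rintro m ⟨R', hsub, rfl, -, -⟩
  exact Finset.card_le_card hsub

lemma exchange {k : ℕ} (hk : kas H R ≤ k) {e : Multiset (Finset (T → O))}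
    (he : e ∈ edges H R k) {x : T → O} (hx : x ∈ H) :
    ∃ g, g ∈ e ∧ (sub H R x ::ₘ e.erase g) ∈ edges H R k := by
  by_contra hcon
  push_neg at hcon
  obtain ⟨⟨hcard, hsubs⟩, hnr⟩ := mem_edges_iff.1 he
  -- for each g ∈ e there is a region containing everything in the swapped edge
  have key : ∀ g ∈ e, ∃ r ∈ R, ∀ g' ∈ (sub H R x ::ₘ e.erase g), g' ⊆ r := by
    intro g hg
    by_contra hnr2
    refine hcon g hg (mem_edges_iff.2 ⟨⟨?_, ?_⟩, hnr2⟩)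
    · have hkpos : 0 < k := by
        have : 0 < Multiset.card e := Multiset.card_pos_iff_exists_mem.2 ⟨g, hg⟩
        omega
      rw [Multiset.card_cons, Multiset.card_erase_of_mem hg, hcard,
        Nat.pred_eq_sub_one]
      omega
    · intro g' hg'
      rcases Multiset.mem_cons.1 hg' with rfl | hg''
      · exact sub_mem_subregions hx
      · exact hsubs g' (Multiset.mem_of_mem_erase hg'')
  -- totalize the choice
  have key' : ∀ g : Finset (T → O), ∃ r : Finset (T → O),
      g ∈ e → (r ∈ R ∧ ∀ g' ∈ (sub H R x ::ₘ e.erase g), g' ⊆ r) := by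
    intro g
    by_cases hg : g ∈ e
    · obtain ⟨r, hr1, hr2⟩ := key g hg
      exact ⟨r, fun _ => ⟨hr1, hr2⟩⟩
    · exact ⟨∅, fun h => absurd h hg⟩
  choose r hr using key'
  -- no element of e is contained in its chosen region
  have hgr : ∀ g ∈ e, g ⊆ r g → False := by
    intro g hg hsubr
    refine hnr ⟨r g, (hr g hg).1, ?_⟩
    intro g' hg'
    by_cases hgg : g' = g
    · rw [hgg]; exact hsubr
    · refine (hr g hg).2 g' (Multiset.mem_cons_of_mem ?_)
      exact (Multiset.mem_erase_of_ne hgg).2 hg'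
  -- e has no duplicates
  have hnodup : e.Nodup := by
    rw [Multiset.nodup_iff_count_le_one]
    intro g
    by_contra hcnt
    push_neg at hcnt
    have hg : g ∈ e := Multiset.count_pos.1 (by omega)
    have hgmem : g ∈ e.erase g := by
      rw [← Multiset.count_pos, Multiset.count_erase_self]
      omega
    exact hgr g hg ((hr g hg).2 g (Multiset.mem_cons_of_mem hgmem))
  set et := e.toFinset with H_et
  have hmem_et : ∀ g, g ∈ et ↔ g ∈ e := fun g => Multiset.mem_toFinset
  have het_card : et.card = k := by
    rw [H_et, Multiset.toFinset_card_of_nodup hnodup, hcard]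
  have hrinj : ∀ g₁ ∈ et, ∀ g₂ ∈ et, r g₁ = r g₂ → g₁ = g₂ := by
    intro g₁ h₁ g₂ h₂ hrr
    by_contra hne
    have hg₁e : g₁ ∈ e := (hmem_et g₁).1 h₁
    have hg₂e : g₂ ∈ e := (hmem_et g₂).1 h₂
    have : g₁ ∈ e.erase g₂ := (Multiset.mem_erase_of_ne hne).2 hg₁e
    have hsubr : g₁ ⊆ r g₂ := (hr g₂ hg₂e).2 g₁ (Multiset.mem_cons_of_mem this)
    rw [← hrr] at hsubr
    exact hgr g₁ hg₁e hsubr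
  set R' := et.image r with H_R'
  have hR'card : R'.card = k := by
    rw [H_R', Finset.card_image_of_injOn (fun a ha b hb => hrinj a ha b hb), het_card]
  -- k is in the kas-defining set
  have hmem : k ∈ {m : ℕ | ∃ R'' : Finset (Finset (T → O)), R'' ⊆ R ∧ R''.card = m ∧
      (∃ h ∈ H, ∀ rr ∈ R'', h ∈ rr) ∧
      ∀ rr ∈ R'', ∃ h ∈ H, h ∉ rr ∧ ∀ rr' ∈ R'', rr' ≠ rr → h ∈ rr'} := by
    refine ⟨R', ?_, hR'card, ⟨x, hx, ?_⟩, ?_⟩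
    · intro rr hrr
      obtain ⟨g, hg, rfl⟩ := Finset.mem_image.1 hrr
      exact (hr g ((hmem_et g).1 hg)).1
    · intro rr hrr
      obtain ⟨g, hg, rfl⟩ := Finset.mem_image.1 hrr
      have hsx : sub H R x ⊆ r g :=
        (hr g ((hmem_et g).1 hg)).2 (sub H R x) (Multiset.mem_cons_self _ _)
      exact hsx (mem_sub_self hx)
    · intro rr hrr
      obtain ⟨g, hg, rfl⟩ := Finset.mem_image.1 hrr
      have hge : g ∈ e := (hmem_et g).1 hg
      obtain ⟨a, hag⟩ := subregion_nonempty (hsubs g hge)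
      refine ⟨a, subregions_subset_H (hsubs g hge) hag, ?_, ?_⟩
      · intro har
        exact hgr g hge (subregion_subset_region (hsubs g hge) hag ((hr g hge).1) har)
      · intro rr' hrr' hne
        obtain ⟨g', hg', rfl⟩ := Finset.mem_image.1 hrr'
        have hg'e : g' ∈ e := (hmem_et g').1 hg'
        have hgg' : g ≠ g' := by
          intro hEq
          exact hne (by rw [hEq])
        have : g ∈ e.erase g' := (Multiset.mem_erase_of_ne hgg').2 hge
        exact (hr g' hg'e).2 g (Multiset.mem_cons_of_mem this) hag
  have hle : k ≤ sSup {m : ℕ | ∃ R'' : Finset (Finset (T → O)), R'' ⊆ R ∧ R''.card = m ∧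
      (∃ h ∈ H, ∀ rr ∈ R'', h ∈ rr) ∧
      ∀ rr ∈ R'', ∃ h ∈ H, h ∉ rr ∧ ∀ rr' ∈ R'', rr' ≠ rr → h ∈ rr'} :=
    le_csSup kas_bddAbove hmem
  have hkas : k + 1 ≤ kas H R := by
    unfold kas
    omega
  omega


/-! ### Masses and edge products -/

variable (P : (T → O) → ℚ)

/-- Mass of a set `g` restricted to `A`. -/
def massF (A g : Finset (T → O)) : ℚ := ∑ h ∈ g.filter (· ∈ A), P h

variable {P}

lemma massF_nonneg (hP : ∀ h, 0 ≤ P h) {A g : Finset (T → O)} :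
    0 ≤ massF P A g :=
  Finset.sum_nonneg fun _ _ => hP _

lemma massF_mono (hP : ∀ h, 0 ≤ P h) {A B g : Finset (T → O)} (hAB : A ⊆ B) :
    massF P A g ≤ massF P B g := by
  refine Finset.sum_le_sum_of_subset_of_nonneg ?_ fun _ _ _ => hP _
  exact Finset.monotone_filter_right _ fun h _ hh => hAB hh

lemma massF_erase_of_not_mem {A g : Finset (T → O)} {x : T → O} (hxg : x ∉ g) :
    massF P (A.erase x) g = massF P A g := by
  unfold massF
  refine Finset.sum_congr (Finset.filter_congr fun h hh => ?_) fun _ _ => rfl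
  have hne : h ≠ x := fun hEq => hxg (hEq ▸ hh)
  simp [Finset.mem_erase, hne]

lemma massF_erase_self {A g : Finset (T → O)} {x : T → O}
    (hxA : x ∈ A) (hxg : x ∈ g) :
    massF P (A.erase x) g = massF P A g - P x := by
  unfold massF
  have hfe : g.filter (· ∈ A.erase x) = (g.filter (· ∈ A)).erase x := by
    ext h
    simp only [Finset.mem_filter, Finset.mem_erase]
    tauto
  rw [hfe, Finset.sum_erase_eq_sub (Finset.mem_filter.2 ⟨hxg, hxA⟩)]

lemma sum_massF_le (hP : ∀ h, 0 ≤ P h) {H : Finset (T → O)}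
    {R : Finset (Finset (T → O))} {G : Finset (Finset (T → O))}
    (hG : G ⊆ subregions H R) (V : Finset (T → O)) :
    ∑ g ∈ G, massF P V g ≤ ∑ h ∈ V, P h := by
  have hdisj : (G : Set (Finset (T → O))).PairwiseDisjoint
      (fun g => g.filter (· ∈ V)) := by
    intro g₁ h₁ g₂ h₂ hne
    refine Finset.disjoint_left.2 fun a ha₁ ha₂ => hne ?_
    rw [Finset.mem_filter] at ha₁ ha₂
    exact subregion_eq_of_common (hG h₁) (hG h₂) ha₁.1 ha₂.1
  rw [show (∑ g ∈ G, massF P V g) = ∑ g ∈ G, ∑ h ∈ g.filter (· ∈ V), P h from rfl,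
    ← Finset.sum_biUnion hdisj]
  refine Finset.sum_le_sum_of_subset_of_nonneg ?_ fun _ _ _ => hP _
  intro a ha
  obtain ⟨g, _, hag⟩ := Finset.mem_biUnion.1 ha
  exact (Finset.mem_filter.1 hag).2

/-! ### Products over multisets -/

lemma prod_map_nonneg {e : Multiset (Finset (T → O))} {f : Finset (T → O) → ℚ}
    (h : ∀ g ∈ e, 0 ≤ f g) : 0 ≤ (e.map f).prod := by
  refine Multiset.prod_nonneg ?_
  intro a ha
  obtain ⟨g, hg, rfl⟩ := Multiset.mem_map.1 ha
  exact h g hg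

lemma prod_map_le {e : Multiset (Finset (T → O))} {f f' : Finset (T → O) → ℚ}
    (h : ∀ g ∈ e, 0 ≤ f g ∧ f g ≤ f' g) :
    (e.map f).prod ≤ (e.map f').prod := by
  induction e using Multiset.induction_on with
  | empty => simp
  | cons g s ih =>
    simp only [Multiset.map_cons, Multiset.prod_cons]
    have hg := h g (Multiset.mem_cons_self g s)
    have hs : ∀ g' ∈ s, 0 ≤ f g' ∧ f g' ≤ f' g' :=
      fun g' hg' => h g' (Multiset.mem_cons_of_mem hg')
    have h1 : 0 ≤ (s.map f).prod := prod_map_nonneg fun g' hg' => (hs g' hg').1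
    have h2 : 0 ≤ f' g := le_trans hg.1 hg.2
    exact mul_le_mul hg.2 (ih hs) h1 h2

lemma prod_sub_mono {e : Multiset (Finset (T → O))}
    {mU m'U mV m'V : Finset (T → O) → ℚ}
    (h : ∀ g ∈ e, 0 ≤ m'U g ∧ m'U g ≤ mU g ∧ 0 ≤ m'V g ∧ m'V g ≤ mV g ∧
      mU g ≤ mV g ∧ m'U g ≤ m'V g ∧ mU g - m'U g ≤ mV g - m'V g) :
    (e.map mU).prod - (e.map m'U).prod ≤ (e.map mV).prod - (e.map m'V).prod := by
  induction e using Multiset.induction_on with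
  | empty => simp
  | cons g s ih =>
    simp only [Multiset.map_cons, Multiset.prod_cons]
    have hg := h g (Multiset.mem_cons_self g s)
    have hs := fun g' hg' => h g' (Multiset.mem_cons_of_mem hg')
    obtain ⟨h1, h2, h3, h4, h5, h6, h7⟩ := hg
    have hIH := ih hs
    -- products over s
    have hU'0 : 0 ≤ (s.map m'U).prod := prod_map_nonneg fun g' hg' => (hs g' hg').1
    have hV'0 : 0 ≤ (s.map m'V).prod := prod_map_nonneg fun g' hg' => (hs g' hg').2.2.1
    have hUd : (s.map m'U).prod ≤ (s.map mU).prod :=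
      prod_map_le fun g' hg' => ⟨(hs g' hg').1, (hs g' hg').2.1⟩
    have hVd : (s.map m'V).prod ≤ (s.map mV).prod :=
      prod_map_le fun g' hg' => ⟨(hs g' hg').2.2.1, (hs g' hg').2.2.2.1⟩
    have hUV' : (s.map m'U).prod ≤ (s.map m'V).prod :=
      prod_map_le fun g' hg' => ⟨(hs g' hg').1, (hs g' hg').2.2.2.2.2.1⟩
    have e1 : mU g * (s.map mU).prod - m'U g * (s.map m'U).prod =
        mU g * ((s.map mU).prod - (s.map m'U).prod) +
          (mU g - m'U g) * (s.map m'U).prod := by ring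
    have e2 : mV g * (s.map mV).prod - m'V g * (s.map m'V).prod =
        mV g * ((s.map mV).prod - (s.map m'V).prod) +
          (mV g - m'V g) * (s.map m'V).prod := by ring
    rw [e1, e2]
    have t1 : mU g * ((s.map mU).prod - (s.map m'U).prod) ≤
        mV g * ((s.map mV).prod - (s.map m'V).prod) := by
      refine mul_le_mul h5 hIH (by linarith) (by linarith)
    have t2 : (mU g - m'U g) * (s.map m'U).prod ≤
        (mV g - m'V g) * (s.map m'V).prod := by
      refine mul_le_mul h7 hUV' hU'0 (by linarith)
    linarith

lemma prod_map_erase {e : Multiset (Finset (T → O))} {f : Finset (T → O) → ℚ}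
    {g : Finset (T → O)} (hg : g ∈ e) :
    (e.map f).prod = f g * ((e.erase g).map f).prod := by
  conv_lhs => rw [← Multiset.cons_erase hg]
  rw [Multiset.map_cons, Multiset.prod_cons]

/-! ### The objective weight `W` -/

variable (P) in
/-- Total weight of surviving hyperedges of masses restricted to `A`. -/
def WW (H : Finset (T → O)) (R : Finset (Finset (T → O))) (k : ℕ)
    (A : Finset (T → O)) : ℚ :=
  ∑ e ∈ edges H R k, (e.map (massF P A)).prod

variable {H : Finset (T → O)} {R : Finset (Finset (T → O))} {k : ℕ}

lemma WW_nonneg (hP : ∀ h, 0 ≤ P h) (A : Finset (T → O)) :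
    0 ≤ WW P H R k A :=
  Finset.sum_nonneg fun _ _ => prod_map_nonneg fun _ _ => massF_nonneg hP

lemma WW_mono (hP : ∀ h, 0 ≤ P h) {A B : Finset (T → O)} (hAB : A ⊆ B) :
    WW P H R k A ≤ WW P H R k B :=
  Finset.sum_le_sum fun _ _ =>
    prod_map_le fun _ _ => ⟨massF_nonneg hP, massF_mono hP hAB⟩

lemma WW_erase_le (hP : ∀ h, 0 ≤ P h) {A : Finset (T → O)} {x : T → O} :
    WW P H R k (A.erase x) ≤ WW P H R k A :=
  WW_mono hP (Finset.erase_subset _ _)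

/-- Monotonicity of the marginal `W A - W (A \ x)` in `A`. -/
lemma WW_erase_diff_mono (hP : ∀ h, 0 ≤ P h) {U V : Finset (T → O)} {x : T → O}
    (hUV : U ⊆ V) (hxU : x ∈ U) :
    WW P H R k U - WW P H R k (U.erase x) ≤
      WW P H R k V - WW P H R k (V.erase x) := by
  unfold WW
  rw [← Finset.sum_sub_distrib, ← Finset.sum_sub_distrib]
  refine Finset.sum_le_sum fun e _ => ?_
  refine prod_sub_mono fun g _ => ?_
  have hxV : x ∈ V := hUV hxU
  have hne : massF P U g - massF P (U.erase x) g =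
      massF P V g - massF P (V.erase x) g := by
    by_cases hxg : x ∈ g
    · rw [massF_erase_self hxU hxg, massF_erase_self hxV hxg]; ring
    · rw [massF_erase_of_not_mem hxg, massF_erase_of_not_mem hxg]; ring
  refine ⟨massF_nonneg hP, massF_mono hP (Finset.erase_subset _ _),
    massF_nonneg hP, massF_mono hP (Finset.erase_subset _ _),
    massF_mono hP hUV, massF_mono hP (Finset.erase_subset_erase _ hUV),
    le_of_eq hne⟩

/-! ### The core inequality -/

lemma core (hP : ∀ h, 0 ≤ P h) (hk : kas H R ≤ k) {V : Finset (T → O)}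
    {x : T → O} (hVH : V ⊆ H) (hx : x ∈ V) :
    P x * WW P H R k V ≤
      (∑ h ∈ V, P h) * (WW P H R k V - WW P H R k (V.erase x)) := by
  classical
  set E := edges H R k with hE
  set gx := sub H R x with hgx
  set a := massF P V gx with ha
  set Z := ∑ h ∈ V, P h with hZ
  have hxH : x ∈ H := hVH hx
  have hZ0 : 0 ≤ Z := Finset.sum_nonneg fun _ _ => hP _
  have ha0 : 0 ≤ a := massF_nonneg hP
  have hWd : 0 ≤ WW P H R k V - WW P H R k (V.erase x) :=
    sub_nonneg.2 (WW_erase_le hP)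
  have hpa : P x ≤ a := by
    rw [ha]
    refine Finset.single_le_sum (fun _ _ => hP _) ?_
    exact Finset.mem_filter.2 ⟨mem_sub_self hxH, hx⟩
  rcases eq_or_lt_of_le ha0 with h0 | hapos
  · have hpx : P x = 0 := le_antisymm (h0 ▸ hpa) (hP x)
    rw [hpx, zero_mul]
    exact mul_nonneg hZ0 hWd
  · refine le_of_mul_le_mul_left ?_ hapos
    -- choice of the exchanged subregion
    have hex : ∀ e : Multiset (Finset (T → O)), ∃ g : Finset (T → O),
        e ∈ E → (g ∈ e ∧ (gx ::ₘ e.erase g) ∈ E) := by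
      intro e
      by_cases he : e ∈ E
      · obtain ⟨g, hg1, hg2⟩ := exchange hk he hxH
        exact ⟨g, fun _ => ⟨hg1, hg2⟩⟩
      · exact ⟨∅, fun h => absurd h he⟩
    choose gch hgch using hex
    set φ : Multiset (Finset (T → O)) → Multiset (Finset (T → O)) :=
      fun e => gx ::ₘ e.erase (gch e) with hφ
    have hmaps : ∀ e ∈ E, φ e ∈ E.filter (fun e' => gx ∈ e') := by
      intro e he
      exact Finset.mem_filter.2 ⟨(hgch e he).2, Multiset.mem_cons_self _ _⟩
    -- the P1 inequality per edge containing gx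
    have hP1 : ∀ e' ∈ E, gx ∈ e' →
        P x * (e'.map (massF P V)).prod ≤
          a * ((e'.map (massF P V)).prod - (e'.map (massF P (V.erase x))).prod) := by
      intro e' hE' hgxe'
      set s := e'.erase gx with hs
      have hprodV : (e'.map (massF P V)).prod = a * (s.map (massF P V)).prod :=
        prod_map_erase hgxe'
      have hprodV' : (e'.map (massF P (V.erase x))).prod =
          (a - P x) * (s.map (massF P (V.erase x))).prod := by
        rw [prod_map_erase hgxe', massF_erase_self hx (mem_sub_self hxH)]
      have hsle : (s.map (massF P (V.erase x))).prod ≤ (s.map (massF P V)).prod :=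
        prod_map_le fun g hg =>
          ⟨massF_nonneg hP, massF_mono hP (Finset.erase_subset _ _)⟩
      have hs0 : 0 ≤ (s.map (massF P (V.erase x))).prod :=
        prod_map_nonneg fun _ _ => massF_nonneg hP
      have hs0' : 0 ≤ (s.map (massF P V)).prod :=
        prod_map_nonneg fun _ _ => massF_nonneg hP
      have hap : 0 ≤ a - P x := sub_nonneg.2 hpa
      rw [hprodV, hprodV']
      have key : (a - P x) * (s.map (massF P (V.erase x))).prod ≤
          (a - P x) * (s.map (massF P V)).prod :=
        mul_le_mul_of_nonneg_left hsle hap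
      nlinarith [hP x, mul_le_mul_of_nonneg_left key ha0]
    calc a * (P x * WW P H R k V)
        = ∑ e ∈ E, a * (P x * (e.map (massF P V)).prod) := by
          rw [WW, ← hE, Finset.mul_sum, Finset.mul_sum]
      _ = ∑ e ∈ E, P x * (massF P V (gch e) * ((φ e).map (massF P V)).prod) := by
          refine Finset.sum_congr rfl fun e he => ?_
          have h1 : (e.map (massF P V)).prod =
              massF P V (gch e) * ((e.erase (gch e)).map (massF P V)).prod :=
            prod_map_erase (hgch e he).1
          have h2 : ((φ e).map (massF P V)).prod =
              a * ((e.erase (gch e)).map (massF P V)).prod := by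
            rw [hφ]
            rw [Multiset.map_cons, Multiset.prod_cons, ← ha]
          rw [h2, h1]; ring
      _ = ∑ e' ∈ E.filter (fun e' => gx ∈ e'), ∑ e ∈ E.filter (fun e0 => φ e0 = e'),
            P x * (massF P V (gch e) * ((φ e).map (massF P V)).prod) :=
          (Finset.sum_fiberwise_of_maps_to hmaps _).symm
      _ ≤ ∑ e' ∈ E.filter (fun e' => gx ∈ e'),
            Z * (P x * (e'.map (massF P V)).prod) := by
          refine Finset.sum_le_sum fun e' he' => ?_
          have hsum : ∑ e ∈ E.filter (fun e0 => φ e0 = e'),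
              P x * (massF P V (gch e) * ((φ e).map (massF P V)).prod) =
              (∑ e ∈ E.filter (fun e0 => φ e0 = e'), massF P V (gch e)) *
                (P x * (e'.map (massF P V)).prod) := by
            rw [Finset.sum_mul]
            refine Finset.sum_congr rfl fun e he => ?_
            have hφe : φ e = e' := (Finset.mem_filter.1 he).2
            rw [hφe]; ring
          rw [hsum]
          have hinj : ∀ e₁ ∈ E.filter (fun e0 => φ e0 = e'),
              ∀ e₂ ∈ E.filter (fun e0 => φ e0 = e'), gch e₁ = gch e₂ → e₁ = e₂ := by
            intro e₁ h₁ e₂ h₂ hgg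
            obtain ⟨h₁E, h₁φ⟩ := Finset.mem_filter.1 h₁
            obtain ⟨h₂E, h₂φ⟩ := Finset.mem_filter.1 h₂
            have k₁ : e₁.erase (gch e₁) = e'.erase gx := by
              rw [← h₁φ, hφ]
              simp only [Multiset.erase_cons_head]
            have k₂ : e₂.erase (gch e₂) = e'.erase gx := by
              rw [← h₂φ, hφ]
              simp only [Multiset.erase_cons_head]
            have r₁ : e₁ = gch e₁ ::ₘ e'.erase gx := by
              rw [← k₁, Multiset.cons_erase (hgch e₁ h₁E).1]
            have r₂ : e₂ = gch e₂ ::ₘ e'.erase gx := by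
              rw [← k₂, Multiset.cons_erase (hgch e₂ h₂E).1]
            rw [r₁, r₂, hgg]
          have himg : (E.filter (fun e0 => φ e0 = e')).image gch ⊆ subregions H R := by
            intro g hg
            obtain ⟨e, he, rfl⟩ := Finset.mem_image.1 hg
            obtain ⟨heE, _⟩ := Finset.mem_filter.1 he
            have := (mem_edges_iff.1 (by rw [hE] at heE; exact heE)).1.2
            exact this (gch e) (hgch e heE).1
          have hble : ∑ e ∈ E.filter (fun e0 => φ e0 = e'), massF P V (gch e) ≤ Z := by
            rw [← Finset.sum_image hinj]
            exact sum_massF_le hP himg V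
          have hnn : 0 ≤ P x * (e'.map (massF P V)).prod :=
            mul_nonneg (hP x) (prod_map_nonneg fun _ _ => massF_nonneg hP)
          exact mul_le_mul_of_nonneg_right hble hnn
      _ ≤ ∑ e' ∈ E.filter (fun e' => gx ∈ e'),
            Z * (a * ((e'.map (massF P V)).prod -
              (e'.map (massF P (V.erase x))).prod)) := by
          refine Finset.sum_le_sum fun e' he' => ?_
          obtain ⟨hE', hgxe'⟩ := Finset.mem_filter.1 he'
          exact mul_le_mul_of_nonneg_left (hP1 e' hE' hgxe') hZ0
      _ ≤ ∑ e' ∈ E, Z * (a * ((e'.map (massF P V)).prod -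
              (e'.map (massF P (V.erase x))).prod)) := by
          refine Finset.sum_le_sum_of_subset_of_nonneg (Finset.filter_subset _ _)
            fun e' he' _ => ?_
          refine mul_nonneg hZ0 (mul_nonneg ha0 (sub_nonneg.2 ?_))
          exact prod_map_le fun g hg =>
            ⟨massF_nonneg hP, massF_mono hP (Finset.erase_subset _ _)⟩
      _ = a * (Z * (WW P H R k V - WW P H R k (V.erase x))) := by
          rw [WW, WW, ← hE, ← Finset.sum_sub_distrib, Finset.mul_sum, Finset.mul_sum]
          refine Finset.sum_congr rfl fun e _ => ?_
          ring

/-! ### The numerator `N` and the ratio `D` -/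

variable (P) in
/-- Numerator of the expected marginal gain. -/
def NN (H : Finset (T → O)) (R : Finset (Finset (T → O))) (k : ℕ) (t : T)
    (A : Finset (T → O)) : ℚ :=
  ∑ h0 ∈ A, P h0 *
    (WW P H R k A - WW P H R k (A.filter fun h' => h' t = h0 t))

variable (P) in
/-- The expected marginal gain as a function of the consistent set. -/
def DD (H : Finset (T → O)) (R : Finset (Finset (T → O))) (k : ℕ) (t : T)
    (A : Finset (T → O)) : ℚ :=
  NN P H R k t A / ∑ h ∈ A, P h

variable {t : T}

lemma NN_nonneg (hP : ∀ h, 0 ≤ P h) {A : Finset (T → O)} :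
    0 ≤ NN P H R k t A :=
  Finset.sum_nonneg fun h0 _ => mul_nonneg (hP h0)
    (sub_nonneg.2 (WW_mono hP (Finset.filter_subset _ _)))

lemma DD_nonneg (hP : ∀ h, 0 ≤ P h) {A : Finset (T → O)} :
    0 ≤ DD P H R k t A :=
  div_nonneg (NN_nonneg hP) (Finset.sum_nonneg fun _ _ => hP _)

/-- The single-removal monotonicity step. -/
lemma NN_erase_mul_le (hP : ∀ h, 0 ≤ P h) (hk : kas H R ≤ k)
    {V : Finset (T → O)} {x : T → O} (hVH : V ⊆ H) (hx : x ∈ V) :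
    NN P H R k t (V.erase x) * (∑ h ∈ V, P h) ≤
      NN P H R k t V * (∑ h ∈ V.erase x, P h) := by
  classical
  set V' := V.erase x with hV'
  set Z := ∑ h ∈ V, P h with hZ
  set Z' := ∑ h ∈ V', P h with hZ'
  have hZsplit : Z' + P x = Z := Finset.sum_erase_add V P hx
  set f : (T → O) → ℚ := fun h0 => P h0 *
    (WW P H R k V - WW P H R k (V.filter fun h' => h' t = h0 t)) with hf
  set f' : (T → O) → ℚ := fun h0 => P h0 *
    (WW P H R k V' - WW P H R k (V'.filter fun h' => h' t = h0 t)) with hf'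
  have hNV : NN P H R k t V = ∑ h0 ∈ V, f h0 := rfl
  have hNV' : NN P H R k t V' = ∑ h0 ∈ V', f' h0 := rfl
  set U := V.filter (fun h' => h' t = x t) with hU
  have hxU : x ∈ U := Finset.mem_filter.2 ⟨hx, rfl⟩
  have hZ0 : 0 ≤ Z := Finset.sum_nonneg fun _ _ => hP _
  have hGU0 : 0 ≤ WW P H R k V - WW P H R k U :=
    sub_nonneg.2 (WW_mono hP (Finset.filter_subset _ _))
  have hWVV' : 0 ≤ WW P H R k V - WW P H R k V' :=
    sub_nonneg.2 (WW_mono hP (Finset.erase_subset _ _))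
  -- Part A : the class h0 t = x t
  have hPartA : ∑ h0 ∈ V.filter (fun h0 => h0 t = x t), f h0 =
      (∑ h0 ∈ U, P h0) * (WW P H R k V - WW P H R k U) := by
    rw [Finset.sum_mul]
    refine Finset.sum_congr hU.symm fun h0 hh0 => ?_
    have hh0' : h0 t = x t := (Finset.mem_filter.1 hh0).2
    have hfil : V.filter (fun h' => h' t = h0 t) = U := by
      rw [hU]
      exact Finset.filter_congr fun h' _ => by rw [hh0']
    rw [hf]
    dsimp only
    rw [hfil]
  have hUZ : ∑ h0 ∈ U, P h0 ≤ Z :=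
    Finset.sum_le_sum_of_subset_of_nonneg (Finset.filter_subset _ _)
      fun _ _ _ => hP _
  -- the filters of the complementary class agree on V and V'
  have hVne : V.filter (fun h0 => ¬ h0 t = x t) =
      V'.filter (fun h0 => ¬ h0 t = x t) := by
    ext h
    simp only [hV', Finset.mem_filter, Finset.mem_erase]
    constructor
    · rintro ⟨h1, h2⟩
      exact ⟨⟨fun he => h2 (by rw [he]), h1⟩, h2⟩
    · rintro ⟨⟨_, h1⟩, h2⟩
      exact ⟨h1, h2⟩
  -- per-element bound on the complementary class
  have hperh0 : ∀ h0 ∈ V'.filter (fun h0 => ¬ h0 t = x t),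
      P x * f h0 ≤ Z * (f h0 - f' h0) := by
    intro h0 hh0
    obtain ⟨hh0V', hne⟩ := Finset.mem_filter.1 hh0
    have hfilterV' : V'.filter (fun h' => h' t = h0 t) =
        V.filter (fun h' => h' t = h0 t) := by
      ext h
      simp only [hV', Finset.mem_filter, Finset.mem_erase]
      constructor
      · rintro ⟨⟨_, h1⟩, h2⟩
        exact ⟨h1, h2⟩
      · rintro ⟨h1, h2⟩
        refine ⟨⟨fun he => hne ?_, h1⟩, h2⟩
        rw [← h2, he]
    have hdiff : f h0 - f' h0 = P h0 * (WW P H R k V - WW P H R k V') := by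
      rw [hf, hf']
      dsimp only
      rw [hfilterV']
      ring
    have hW0 : 0 ≤ WW P H R k (V.filter fun h' => h' t = h0 t) := WW_nonneg hP _
    have hcore : P x * WW P H R k V ≤ Z * (WW P H R k V - WW P H R k V') :=
      core hP hk hVH hx
    have hstep : P x * (WW P H R k V -
        WW P H R k (V.filter fun h' => h' t = h0 t)) ≤
        Z * (WW P H R k V - WW P H R k V') := by
      have : P x * (WW P H R k V -
          WW P H R k (V.filter fun h' => h' t = h0 t)) ≤ P x * WW P H R k V := by
        have := hP x
        nlinarith
      linarith
    calc P x * f h0 = P h0 * (P x * (WW P H R k V -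
          WW P H R k (V.filter fun h' => h' t = h0 t))) := by rw [hf]; ring
      _ ≤ P h0 * (Z * (WW P H R k V - WW P H R k V')) :=
          mul_le_mul_of_nonneg_left hstep (hP h0)
      _ = Z * (f h0 - f' h0) := by rw [hdiff]; ring
  -- decomposition of NN V - NN V'
  have hNsplit : NN P H R k t V - NN P H R k t V' =
      f x + ∑ h0 ∈ V', (f h0 - f' h0) := by
    rw [hNV, hNV', Finset.sum_sub_distrib]
    have h1 : ∑ h0 ∈ V', f h0 + f x = ∑ h0 ∈ V, f h0 :=
      Finset.sum_erase_add V f hx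
    linarith
  -- nonnegativity of the matching-outcome part
  have hMatch : 0 ≤ ∑ h0 ∈ V'.filter (fun h0 => h0 t = x t), (f h0 - f' h0) := by
    refine Finset.sum_nonneg fun h0 hh0 => ?_
    obtain ⟨hh0V', hh0t⟩ := Finset.mem_filter.1 hh0
    have hfV : V.filter (fun h' => h' t = h0 t) = U := by
      rw [hU]
      exact Finset.filter_congr fun h' _ => by rw [hh0t]
    have hfV' : V'.filter (fun h' => h' t = h0 t) = U.erase x := by
      ext h
      simp only [hV', hU, Finset.mem_filter, Finset.mem_erase]
      constructor
      · rintro ⟨⟨hhx, h1⟩, h2⟩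
        exact ⟨hhx, h1, by rw [h2, hh0t]⟩
      · rintro ⟨hhx, h1, h2⟩
        exact ⟨⟨hhx, h1⟩, by rw [h2, hh0t]⟩
    have hdm : WW P H R k U - WW P H R k (U.erase x) ≤
        WW P H R k V - WW P H R k V' :=
      WW_erase_diff_mono hP (Finset.filter_subset _ _) hxU
    have : f h0 - f' h0 = P h0 * ((WW P H R k V - WW P H R k V') -
        (WW P H R k U - WW P H R k (U.erase x))) := by
      rw [hf, hf']
      dsimp only
      rw [hfV, hfV']
      ring
    rw [this]
    exact mul_nonneg (hP h0) (by linarith)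
  -- the key inequality
  have key : P x * NN P H R k t V ≤ Z * (NN P H R k t V - NN P H R k t V') := by
    have hsplitV : ∑ h0 ∈ V, f h0 =
        ∑ h0 ∈ V.filter (fun h0 => h0 t = x t), f h0 +
          ∑ h0 ∈ V.filter (fun h0 => ¬ h0 t = x t), f h0 :=
      (Finset.sum_filter_add_sum_filter_not V _ f).symm
    have hsplitV' : ∑ h0 ∈ V', (f h0 - f' h0) =
        ∑ h0 ∈ V'.filter (fun h0 => h0 t = x t), (f h0 - f' h0) +
          ∑ h0 ∈ V'.filter (fun h0 => ¬ h0 t = x t), (f h0 - f' h0) :=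
      (Finset.sum_filter_add_sum_filter_not V' _ _).symm
    have hfx : f x = P x * (WW P H R k V - WW P H R k U) := by
      rw [hf, hU]
    have hA : P x * (∑ h0 ∈ V.filter (fun h0 => h0 t = x t), f h0) ≤ Z * f x := by
      rw [hPartA, hfx]
      have h1 : (∑ h0 ∈ U, P h0) * (WW P H R k V - WW P H R k U) ≤
          Z * (WW P H R k V - WW P H R k U) :=
        mul_le_mul_of_nonneg_right hUZ hGU0
      calc P x * ((∑ h0 ∈ U, P h0) * (WW P H R k V - WW P H R k U))
          ≤ P x * (Z * (WW P H R k V - WW P H R k U)) :=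
            mul_le_mul_of_nonneg_left h1 (hP x)
        _ = Z * (P x * (WW P H R k V - WW P H R k U)) := by ring
    have hB : P x * (∑ h0 ∈ V.filter (fun h0 => ¬ h0 t = x t), f h0) ≤
        Z * ∑ h0 ∈ V'.filter (fun h0 => ¬ h0 t = x t), (f h0 - f' h0) := by
      rw [hVne, Finset.mul_sum, Finset.mul_sum]
      exact Finset.sum_le_sum hperh0
    have hMatch' : 0 ≤ Z * ∑ h0 ∈ V'.filter (fun h0 => h0 t = x t),
        (f h0 - f' h0) := mul_nonneg hZ0 hMatch
    have expand : Z * (NN P H R k t V - NN P H R k t V') =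
        Z * f x + Z * ∑ h0 ∈ V'.filter (fun h0 => h0 t = x t), (f h0 - f' h0) +
          Z * ∑ h0 ∈ V'.filter (fun h0 => ¬ h0 t = x t), (f h0 - f' h0) := by
      rw [hNsplit, hsplitV']
      ring
    have lhs : P x * NN P H R k t V =
        P x * (∑ h0 ∈ V.filter (fun h0 => h0 t = x t), f h0) +
          P x * (∑ h0 ∈ V.filter (fun h0 => ¬ h0 t = x t), f h0) := by
      rw [hNV, hsplitV]
      ring
    linarith
  calc NN P H R k t V' * Z
      = NN P H R k t V * Z - Z * (NN P H R k t V - NN P H R k t V') := by ring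
    _ ≤ NN P H R k t V * Z - P x * NN P H R k t V := by linarith
    _ = NN P H R k t V * Z' := by rw [← hZsplit]; ring

lemma DD_erase_le (hP : ∀ h, 0 ≤ P h) (hk : kas H R ≤ k)
    {V : Finset (T → O)} {x : T → O} (hVH : V ⊆ H) (hx : x ∈ V) :
    DD P H R k t (V.erase x) ≤ DD P H R k t V := by
  have hZ'0 : 0 ≤ ∑ h ∈ V.erase x, P h := Finset.sum_nonneg fun _ _ => hP _
  rcases eq_or_lt_of_le hZ'0 with h0 | hpos
  · have hN0 : NN P H R k t (V.erase x) = 0 := by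
      refine Finset.sum_eq_zero fun h0' hh0 => ?_
      have hp0 : P h0' = 0 :=
        (Finset.sum_eq_zero_iff_of_nonneg fun _ _ => hP _).1 h0.symm h0' hh0
      rw [hp0, zero_mul]
    rw [DD, hN0, zero_div]
    exact DD_nonneg hP
  · have hZpos : 0 < ∑ h ∈ V, P h := by
      refine lt_of_lt_of_le hpos ?_
      exact Finset.sum_le_sum_of_subset_of_nonneg (Finset.erase_subset _ _)
        fun _ _ _ => hP _
    rw [DD, DD, div_le_div_iff₀ hpos hZpos]
    exact NN_erase_mul_le hP hk hVH hx

lemma DD_mono (hP : ∀ h, 0 ≤ P h) (hk : kas H R ≤ k) :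
    ∀ (n : ℕ) (V : Finset (T → O)), V.card ≤ n → V ⊆ H →
      ∀ V' ⊆ V, DD P H R k t V' ≤ DD P H R k t V := by
  intro n
  induction n with
  | zero =>
    intro V hc hVH V' hV'
    have hV0 : V = ∅ := Finset.card_eq_zero.1 (Nat.le_zero.1 hc)
    have hV'0 : V' = ∅ := Finset.subset_empty.1 (hV0 ▸ hV')
    rw [hV0, hV'0]
  | succ n ih =>
    intro V hc hVH V' hV'
    by_cases hEq : V' = V
    · rw [hEq]
    · have hss : ∃ x, x ∈ V ∧ x ∉ V' := by
        by_contra hco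
        push_neg at hco
        exact hEq (Finset.Subset.antisymm hV' fun x hx => hco x hx)
      obtain ⟨x, hxV, hxV'⟩ := hss
      have h1 : DD P H R k t V' ≤ DD P H R k t (V.erase x) :=
        ih (V.erase x) (by rw [Finset.card_erase_of_mem hxV]; omega)
          ((Finset.erase_subset _ _).trans hVH) V'
          (Finset.subset_erase.2 ⟨hV', hxV'⟩)
      exact h1.trans (DD_erase_le hP hk hVH hxV)

/-! ### The value of `delta` in terms of `DD` -/

lemma delta_eq (S : Set (T × O)) :
    delta H R k P t S = DD P H R k t (H.filter fun h => consistent S h) := by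
  classical
  set V := H.filter (fun h => consistent S h) with hV
  set Z := ∑ h ∈ V, P h with hZv
  have hweight : ∀ S₀ : Set (T × O), ∀ e ∈ edges H R k,
      edgeWeight P S₀ e =
        (e.map (massF P (H.filter fun h => consistent S₀ h))).prod := by
    intro S₀ e he
    unfold edgeWeight
    congr 1
    refine Multiset.map_congr rfl fun g hg => ?_
    unfold mass massF
    refine Finset.sum_congr (Finset.filter_congr fun h hh => ?_) fun _ _ => rfl
    have hgH : g ⊆ H := subregions_subset_H ((mem_edges_iff.1 he).1.2 g hg)
    simp only [Finset.mem_filter]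
    exact ⟨fun hc => ⟨hgH hh, hc⟩, fun hc => hc.2⟩
  have hfHEC : ∀ o : O, fHEC H R k P (S ∪ {(t, o)}) - fHEC H R k P S =
      WW P H R k V - WW P H R k (V.filter fun h' => h' t = o) := by
    intro o
    unfold fHEC
    have h1 : ∑ e ∈ edges H R k, edgeWeight P S e = WW P H R k V := by
      rw [WW]
      exact Finset.sum_congr rfl fun e he => hweight S e he
    have h2 : ∑ e ∈ edges H R k, edgeWeight P (S ∪ {(t, o)}) e =
        WW P H R k (V.filter fun h' => h' t = o) := by
      rw [WW]
      refine Finset.sum_congr rfl fun e he => ?_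
      rw [hweight _ e he]
      have hfe : (H.filter fun h => consistent (S ∪ {(t, o)}) h) =
          V.filter fun h' => h' t = o := by
        ext h
        simp only [hV, Finset.mem_filter, consistent_union_singleton]
        tauto
      rw [hfe]
    rw [h1, h2]
    ring
  unfold delta condP
  rw [← hV]
  have hstep : ∀ h ∈ V,
      P h / Z * (fHEC H R k P (S ∪ {(t, h t)}) - fHEC H R k P S) =
        P h * (WW P H R k V - WW P H R k (V.filter fun h' => h' t = h t)) / Z := by
    intro h _
    rw [hfHEC (h t), div_mul_eq_mul_div]
  rw [Finset.sum_congr rfl hstep, ← Finset.sum_div]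
  rfl

end HECaux

/-- Adaptive submodularity of the HEC objective (Theorem 2): for a rational
nonnegative prior and hyperedge cardinality `k ≥ k_as`, the expected marginal
gain of any test `t` not appearing in the evidence can only decrease as
evidence accumulates. -/
theorem hec_adaptive_submodular (H : Finset (T → O))
    (R : Finset (Finset (T → O))) (hR : ∀ r ∈ R, r ⊆ H)
    (hcov : ∀ h ∈ H, ∃ r ∈ R, h ∈ r)
    (P : (T → O) → ℚ) (hP : ∀ h, 0 ≤ P h) (hPsum : ∑ h ∈ H, P h = 1)
    (k : ℕ) (hk : kas H R ≤ k)
    (S S' : Set (T × O)) (hSS' : S ⊆ S')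
    (t : T) (ht : ∀ o : O, (t, o) ∉ S') :
    delta H R k P t S' ≤ delta H R k P t S := by
  rw [HECaux.delta_eq, HECaux.delta_eq]
  exact HECaux.DD_mono hP hk (H.filter fun h => consistent S h).card
    (H.filter fun h => consistent S h) le_rfl (Finset.filter_subset _ _)
    (H.filter fun h => consistent S' h)
    (Finset.monotone_filter_right _ fun h _ hc => HECaux.consistent_mono hSS' hc)

end HEC
end
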